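/- (Fixed points of T_σ are mild solutions.) In the block-diagonal Jordan setting, let f : ℂⁿ → ℂⁿ be continuous, σ ∈ E^s, and let x : [0,∞) → ℂⁿ be a bounded continuous fixed point of T_σ such that τ ↦ (p/τ) B̃(−τ) π_u f(x(τ)) is Bochner integrable on (0,∞). Then π_s x(0) = σ, π_u x(0) = ∫_0^∞ (p/τ) B̃(−τ) π_u f(x(τ)) dτ, and for all t ≥ 0, x(t) = E_p(t^p A) x(0) + ∫_0^t (t−τ)^{p−1} E_{p,p}((t−τ)^p A) f(x(τ)) dτ. -/

import Mathlib

open MeasureTheory Filter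

noncomputable def mlE (p β : ℝ) (z : ℂ) : ℂ :=
  ∑' k : ℕ, z ^ k / Complex.Gamma ((p * k + β : ℝ) : ℂ)

noncomputable def mlER (p β x : ℝ) : ℝ :=
  ∑' k : ℕ, x ^ k / Real.Gamma (p * k + β)

noncomputable def psi (p : ℝ) (m : ℕ) (t : ℝ) (lam : ℂ) : ℂ :=
  (1 / (m.factorial : ℂ)) *
    iteratedDeriv m (fun z : ℂ => (1 / (p : ℂ)) * Complex.exp ((t : ℂ) * z ^ (1 / (p : ℂ)))) lam

noncomputable def psiT (p : ℝ) (m : ℕ) (t : ℝ) (lam : ℂ) : ℂ :=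
  (1 / (m.factorial : ℂ)) *
    iteratedDeriv (m + 1) (fun z : ℂ => Complex.exp ((t : ℂ) * z ^ (1 / (p : ℂ)))) lam

noncomputable def mlEM {ι : Type*} [Fintype ι] [DecidableEq ι] (p β : ℝ) (M : Matrix ι ι ℂ) :
    Matrix ι ι ℂ :=
  ∑' k : ℕ, (Complex.Gamma ((p * k + β : ℝ) : ℂ))⁻¹ • M ^ k

def jordanBlock (n : ℕ) (lam : ℂ) : Matrix (Fin n) (Fin n) ℂ :=
  Matrix.of fun i j => if i = j then lam else if (i : ℕ) + 1 = (j : ℕ) then 1 else 0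

noncomputable def BMat (p : ℝ) (n : ℕ) (t : ℝ) (lam : ℂ) : Matrix (Fin n) (Fin n) ℂ :=
  Matrix.of fun i j => if (i : ℕ) ≤ (j : ℕ) then psi p ((j : ℕ) - (i : ℕ)) t lam else 0

noncomputable def BTMat (p : ℝ) (n : ℕ) (t : ℝ) (lam : ℂ) : Matrix (Fin n) (Fin n) ℂ :=
  Matrix.of fun i j => if (i : ℕ) ≤ (j : ℕ) then psiT p ((j : ℕ) - (i : ℕ)) t lam else 0

noncomputable def opNorm {ι : Type*} [Fintype ι] [DecidableEq ι] (M : Matrix ι ι ℂ) : ℝ :=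
  ‖LinearMap.toContinuousLinearMap (Matrix.toEuclideanLin M)‖

noncomputable def mvE {ι : Type*} [Fintype ι] [DecidableEq ι] (M : Matrix ι ι ℂ)
    (v : EuclideanSpace ℂ ι) : EuclideanSpace ℂ ι :=
  Matrix.toEuclideanLin M v

def BC {E : Type*} [NormedAddCommGroup E] (x : ℝ → E) : Prop :=
  ContinuousOn x (Set.Ici 0) ∧ ∃ C, ∀ t : ℝ, 0 ≤ t → ‖x t‖ ≤ C

noncomputable def supNorm {E : Type*} [NormedAddCommGroup E] (x : ℝ → E) : ℝ :=
  ⨆ t : Set.Ici (0 : ℝ), ‖x (t : ℝ)‖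

structure JordanSetting where
  p : ℝ
  hp0 : 0 < p
  hp1 : p < 1
  l : ℕ
  s : ℕ
  hsl : s ≤ l
  nsz : Fin l → ℕ
  hnsz : ∀ j, 1 ≤ nsz j
  eig : Fin l → ℂ
  heig : ∀ j, eig j ≠ 0
  hstable : ∀ j : Fin l, (j : ℕ) < s → p * Real.pi / 2 < |Complex.arg (eig j)|
  hunstable : ∀ j : Fin l, s ≤ (j : ℕ) → |Complex.arg (eig j)| < p * Real.pi / 2

abbrev JordanSetting.ix (S : JordanSetting) : Type := Σ j : Fin S.l, Fin (S.nsz j)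

abbrev ES (S : JordanSetting) : Type := EuclideanSpace ℂ S.ix

noncomputable def JordanSetting.A (S : JordanSetting) : Matrix S.ix S.ix ℂ :=
  Matrix.blockDiagonal' fun j => jordanBlock (S.nsz j) (S.eig j)

noncomputable def JordanSetting.B (S : JordanSetting) (t : ℝ) : Matrix S.ix S.ix ℂ :=
  Matrix.blockDiagonal' fun j =>
    if (j : ℕ) < S.s then 0 else BMat S.p (S.nsz j) t (S.eig j)

noncomputable def JordanSetting.Bt (S : JordanSetting) (t : ℝ) : Matrix S.ix S.ix ℂ :=
  Matrix.blockDiagonal' fun j =>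
    if (j : ℕ) < S.s then 0 else BTMat S.p (S.nsz j) t (S.eig j)

noncomputable def JordanSetting.piu (S : JordanSetting) (v : ES S) : ES S :=
  (WithLp.equiv 2 (S.ix → ℂ)).symm fun i =>
    if S.s ≤ (i.1 : ℕ) then (WithLp.equiv 2 (S.ix → ℂ)) v i else 0

noncomputable def JordanSetting.pis (S : JordanSetting) (v : ES S) : ES S :=
  (WithLp.equiv 2 (S.ix → ℂ)).symm fun i =>
    if (i.1 : ℕ) < S.s then (WithLp.equiv 2 (S.ix → ℂ)) v i else 0

noncomputable def JordanSetting.EP (S : JordanSetting) (t : ℝ) : Matrix S.ix S.ix ℂ :=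
  mlEM S.p 1 (((t ^ S.p : ℝ) : ℂ) • S.A)

noncomputable def JordanSetting.EPP (S : JordanSetting) (t : ℝ) : Matrix S.ix S.ix ℂ :=
  mlEM S.p S.p (((t ^ S.p : ℝ) : ℂ) • S.A)

noncomputable def JordanSetting.T (S : JordanSetting) (f : ES S → ES S) (σ : ES S)
    (x : ℝ → ES S) (t : ℝ) : ES S :=
  mvE (S.EP t) σ
    + mvE (S.EP t) (∫ τ in Set.Ioi (0 : ℝ), (S.p / τ) • mvE (S.Bt (-τ)) (S.piu (f (x τ))))
    + ∫ τ in Set.Ioc (0 : ℝ) t, ((t - τ) ^ (S.p - 1)) • mvE (S.EPP (t - τ)) (f (x τ))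


section Aux

variable (S : JordanSetting)

lemma pis_apply (v : ES S) (i : S.ix) :
    S.pis v i = if (i.1 : ℕ) < S.s then v i else 0 := rfl

lemma piu_apply (v : ES S) (i : S.ix) :
    S.piu v i = if S.s ≤ (i.1 : ℕ) then v i else 0 := rfl

noncomputable def pisL : ES S →L[ℂ] ES S :=
  LinearMap.toContinuousLinearMap
    { toFun := S.pis
      map_add' := by
        intro u v; ext i
        simp only [pis_apply, PiLp.add_apply]
        split <;> simp
      map_smul' := by
        intro c v; ext i
        simp only [pis_apply, PiLp.smul_apply, RingHom.id_apply]
        split <;> simp }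

noncomputable def piuL : ES S →L[ℂ] ES S :=
  LinearMap.toContinuousLinearMap
    { toFun := S.piu
      map_add' := by
        intro u v; ext i
        simp only [piu_apply, PiLp.add_apply]
        split <;> simp
      map_smul' := by
        intro c v; ext i
        simp only [piu_apply, PiLp.smul_apply, RingHom.id_apply]
        split <;> simp }

@[simp] lemma pisL_apply (v : ES S) : pisL S v = S.pis v := rfl
@[simp] lemma piuL_apply (v : ES S) : piuL S v = S.piu v := rfl

lemma pis_pis (v : ES S) : S.pis (S.pis v) = S.pis v := by
  ext i
  simp only [pis_apply]
  split <;> simp_all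

lemma piu_pis (v : ES S) : S.piu (S.pis v) = 0 := by
  ext i
  simp only [piu_apply, pis_apply]
  split
  · rename_i h
    rw [if_neg (by omega)]; rfl
  · rfl

lemma Bt_row_zero (t : ℝ) (i j : S.ix) (hi : (i.1 : ℕ) < S.s) : S.Bt t i j = 0 := by
  obtain ⟨i1, a⟩ := i
  obtain ⟨j1, b⟩ := j
  rw [JordanSetting.Bt]
  rcases eq_or_ne i1 j1 with h | h
  · subst h
    rw [Matrix.blockDiagonal'_apply_eq]
    simp only at hi
    rw [if_pos hi]
    rfl
  · exact Matrix.blockDiagonal'_apply_ne _ _ _ h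

lemma mvE_apply {ι : Type*} [Fintype ι] [DecidableEq ι] (M : Matrix ι ι ℂ)
    (v : EuclideanSpace ℂ ι) (i : ι) : mvE M v i = ∑ j, M i j * v j := rfl

lemma pis_mvE_Bt (t : ℝ) (v : ES S) : S.pis (mvE (S.Bt t) v) = 0 := by
  ext i
  simp only [pis_apply]
  split
  · rename_i h
    rw [mvE_apply]
    simp [Bt_row_zero S t i _ h]
  · rfl

lemma piu_mvE_Bt (t : ℝ) (v : ES S) : S.piu (mvE (S.Bt t) v) = mvE (S.Bt t) v := by
  ext i
  simp only [piu_apply]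
  split
  · rfl
  · rename_i h
    rw [mvE_apply]
    simp [Bt_row_zero S t i _ (by omega)]

lemma EP_zero : S.EP 0 = 1 := by
  rw [JordanSetting.EP, Real.zero_rpow (ne_of_gt S.hp0)]
  rw [show (((0:ℝ):ℂ)) • S.A = 0 by simp]
  rw [mlEM, tsum_eq_single 0]
  · norm_num
  · intro k hk
    rw [zero_pow hk, smul_zero]

lemma mvE_one {ι : Type*} [Fintype ι] [DecidableEq ι] (v : EuclideanSpace ℂ ι) :
    mvE (1 : Matrix ι ι ℂ) v = v := by
  rw [mvE, Matrix.toEuclideanLin_apply, Matrix.one_mulVec, WithLp.toLp_ofLp]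

lemma mvE_add {ι : Type*} [Fintype ι] [DecidableEq ι] (M : Matrix ι ι ℂ)
    (u v : EuclideanSpace ℂ ι) : mvE M (u + v) = mvE M u + mvE M v :=
  map_add (Matrix.toEuclideanLin M) u v

end Aux

theorem stmt_16 (S : JordanSetting) (f : ES S → ES S) (hf : Continuous f)
    (σ : ES S) (hσ : σ ∈ Set.range S.pis)
    (x : ℝ → ES S) (hx : BC x)
    (hint : MeasureTheory.IntegrableOn
      (fun τ : ℝ => (S.p / τ) • mvE (S.Bt (-τ)) (S.piu (f (x τ)))) (Set.Ioi 0))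
    (hfix : ∀ t ≥ (0 : ℝ), S.T f σ x t = x t) :
    S.pis (x 0) = σ ∧
      S.piu (x 0) = (∫ τ in Set.Ioi (0 : ℝ), (S.p / τ) • mvE (S.Bt (-τ)) (S.piu (f (x τ)))) ∧
      ∀ t ≥ (0 : ℝ),
        x t = mvE (S.EP t) (x 0)
          + ∫ τ in Set.Ioc (0 : ℝ) t, ((t - τ) ^ (S.p - 1)) • mvE (S.EPP (t - τ)) (f (x τ)) := by
  set I := ∫ τ in Set.Ioi (0 : ℝ), (S.p / τ) • mvE (S.Bt (-τ)) (S.piu (f (x τ))) with hI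
  obtain ⟨y, rfl⟩ := hσ
  have hx0 : x 0 = S.pis y + I := by
    have h0 := hfix 0 le_rfl
    rw [JordanSetting.T, Set.Ioc_self] at h0
    simp only [Measure.restrict_empty, integral_zero_measure, add_zero] at h0
    rw [EP_zero, mvE_one, mvE_one] at h0
    exact h0.symm
  have hpisI : S.pis I = 0 := by
    have := (ContinuousLinearMap.integral_comp_comm (pisL S) hint).symm
    simp only [pisL_apply] at this
    rw [this]
    have : ∀ τ : ℝ, S.pis ((S.p / τ) • mvE (S.Bt (-τ)) (S.piu (f (x τ)))) = 0 := by
      intro τ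
      have := map_smul (pisL S) ((S.p / τ : ℝ) : ℂ) (mvE (S.Bt (-τ)) (S.piu (f (x τ))))
      simp only [pisL_apply] at this
      rw [show ((S.p / τ : ℝ) : ℂ) • mvE (S.Bt (-τ)) (S.piu (f (x τ)))
            = (S.p / τ) • mvE (S.Bt (-τ)) (S.piu (f (x τ))) from rfl] at this
      rw [this, pis_mvE_Bt, smul_zero]
    simp only [this, integral_zero]
  have hpiuI : S.piu I = I := by
    have := (ContinuousLinearMap.integral_comp_comm (piuL S) hint).symm
    simp only [piuL_apply] at this
    rw [this]
    congr 1
    funext τ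
    have := map_smul (piuL S) ((S.p / τ : ℝ) : ℂ) (mvE (S.Bt (-τ)) (S.piu (f (x τ))))
    simp only [piuL_apply] at this
    rw [show ((S.p / τ : ℝ) : ℂ) • mvE (S.Bt (-τ)) (S.piu (f (x τ)))
          = (S.p / τ) • mvE (S.Bt (-τ)) (S.piu (f (x τ))) from rfl] at this
    rw [this, piu_mvE_Bt]
    exact Complex.coe_smul _ _
  have hpisA : S.pis (x 0) = S.pis y := by
    rw [hx0]
    have := map_add (pisL S) (S.pis y) I
    simp only [pisL_apply] at this
    rw [this, pis_pis, hpisI, add_zero]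
  have hpiuA : S.piu (x 0) = I := by
    rw [hx0]
    have := map_add (piuL S) (S.pis y) I
    simp only [piuL_apply] at this
    rw [this, piu_pis, hpiuI, zero_add]
  refine ⟨hpisA, hpiuA, ?_⟩
  intro t ht
  have h := hfix t ht
  rw [JordanSetting.T] at h
  rw [← h, hx0, mvE_add]
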